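/- arXiv:1102.4600 — 4 statements merged into one kernel-verified Lean document; each statement's English description precedes it below -/
import Mathlib

section
/- For every irrational x ∈ (0,1) and every integer n ≥ 0, 𝐓^n(x_0, y_0) = (T^{n+1}(x), −q_{n+1}/q_n); that is, the first coordinate of the n-th iterate is [a_{n+2}, a_{n+3}, ...] and the second coordinate is −a_{n+1} − [a_n, ..., a_1] = −q_{n+1}/q_n. -/
open Real MeasureTheory Filter Set
open scoped Classical

noncomputable section

/-- The Gauss map `T x = 1/x - ⌊1/x⌋`. -/
def gaussMap (x : ℝ) : ℝ := 1/x - ⌊1/x⌋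

/-- The natural extension `𝐓(x,y) = (1/x - ⌊1/x⌋, 1/y - ⌊1/x⌋)`. -/
def natExt (p : ℝ × ℝ) : ℝ × ℝ := (1/p.1 - ⌊1/p.1⌋, 1/p.2 - ⌊1/p.1⌋)

/-- `(x₀, y₀) = 𝐓(x, ∞) = (1/x - ⌊1/x⌋, -⌊1/x⌋)`. -/
def initPt (x : ℝ) : ℝ × ℝ := (1/x - ⌊1/x⌋, -(⌊1/x⌋ : ℝ))

/-- Partial quotient `a_n = ⌊1 / T^{n-1} x⌋` (indexed from 1). -/
def cfA (x : ℝ) (n : ℕ) : ℤ := ⌊1 / (gaussMap^[n-1] x)⌋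

/-- The pair `(p_n, q_n)` of numerator and denominator of the `n`-th convergent. -/
def pq (x : ℝ) : ℕ → ℤ × ℤ
  | 0 => (0, 1)
  | 1 => (1, ⌊1/x⌋)
  | n+2 => (cfA x (n+2) * (pq x (n+1)).1 + (pq x n).1,
            cfA x (n+2) * (pq x (n+1)).2 + (pq x n).2)

def pconv (x : ℝ) (n : ℕ) : ℤ := (pq x n).1
def qconv (x : ℝ) (n : ℕ) : ℤ := (pq x n).2

/-- `θ_n(x) = q_n |q_n x - p_n|`. -/
def theta (x : ℝ) (n : ℕ) : ℝ := (qconv x n : ℝ) * |(qconv x n : ℝ) * x - (pconv x n : ℝ)|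

/-- `Ω = (0,1) × (-∞,-1)`. -/
def Ωset : Set (ℝ × ℝ) := Set.Ioo (0:ℝ) 1 ×ˢ Set.Iio (-1 : ℝ)

/-- `Ω_α = {(x,y) ∈ Ω : 1/(x-y) < α}`. -/
def Ωα (α : ℝ) : Set (ℝ × ℝ) := {p ∈ Ωset | 1 / (p.1 - p.2) < α}

/-- First return time to `Ω_α` (defined as `sInf`, so `0` when undefined). -/
def tauα (α : ℝ) (p : ℝ × ℝ) : ℕ := sInf {n : ℕ | 1 ≤ n ∧ natExt^[n] p ∈ Ωα α}

/-- First return map `𝐓_α`. -/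
def retMap (α : ℝ) (p : ℝ × ℝ) : ℝ × ℝ := natExt^[tauα α p] p

/-- The invariant measure `μ` with density `(log 2)⁻¹ (x-y)⁻²` on `Ω`. -/
def μnat : Measure (ℝ × ℝ) :=
  (volume.restrict Ωset).withDensity
    (fun p => ENNReal.ofReal ((Real.log 2)⁻¹ * ((p.1 - p.2)⁻¹)^2))

/-- `c_α = (log 2 · μ(Ω_α))⁻¹`, explicitly. -/
def cα (α : ℝ) : ℝ := if 1/2 < α then (1 - α + Real.log 2 + Real.log α)⁻¹ else α⁻¹

/-- The probability measure `μ_α` with density `c_α (x-y)⁻²` on `Ω_α`. -/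
def μmeas (α : ℝ) : Measure (ℝ × ℝ) :=
  (volume.restrict (Ωα α)).withDensity
    (fun p => ENNReal.ofReal (cα α * ((p.1 - p.2)⁻¹)^2))

/-- `Ω_α⁻ = {(x,y) ∈ Ω : α < x, y < αx/(α-x)}`. -/
def Ωminus (α : ℝ) : Set (ℝ × ℝ) := {p ∈ Ωset | α < p.1 ∧ p.2 < α * p.1 / (α - p.1)}

lemma gauss_step {y : ℝ} (hirr : Irrational y) (hy : y ∈ Set.Ioo (0:ℝ) 1) :
    Irrational (gaussMap y) ∧ gaussMap y ∈ Set.Ioo (0:ℝ) 1 := by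
  have h1 : Irrational (1/y) := by
    simpa [one_div] using hirr.inv
  have hfr : gaussMap y = Int.fract (1/y) := rfl
  have hir : Irrational (gaussMap y) := by
    show Irrational (1/y - (⌊1/y⌋:ℤ))
    exact Irrational.sub_intCast h1 _
  refine ⟨hir, ?_, ?_⟩
  · rcases lt_or_eq_of_le (Int.fract_nonneg (1/y)) with h | h
    · rw [hfr]; exact h
    · exact absurd h.symm (by rw [← hfr]; exact hir.ne_zero)
  · rw [hfr]; exact Int.fract_lt_one _

lemma gauss_iter (x : ℝ) (hirr : Irrational x) (hx : x ∈ Set.Ioo (0:ℝ) 1) (n : ℕ) :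
    Irrational (gaussMap^[n] x) ∧ gaussMap^[n] x ∈ Set.Ioo (0:ℝ) 1 := by
  induction n with
  | zero => exact ⟨hirr, hx⟩
  | succ k ih =>
    rw [Function.iterate_succ_apply']
    exact gauss_step ih.1 ih.2

lemma floor_one_div_ge {y : ℝ} (hy : y ∈ Set.Ioo (0:ℝ) 1) : 1 ≤ ⌊1/y⌋ := by
  have : (1:ℝ) < 1/y := by
    rw [lt_div_iff₀ hy.1]; linarith [hy.2]
  exact Int.le_floor.mpr (by exact_mod_cast this.le)

lemma qconv_pos (x : ℝ) (hirr : Irrational x) (hx : x ∈ Set.Ioo (0:ℝ) 1) (n : ℕ) :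
    0 < qconv x n ∧ 0 < qconv x (n+1) := by
  induction n with
  | zero =>
    refine ⟨by simp [qconv, pq], ?_⟩
    have := floor_one_div_ge hx
    simp only [qconv, pq]
    omega
  | succ k ih =>
    refine ⟨ih.2, ?_⟩
    have hq : qconv x (k+2) = cfA x (k+2) * qconv x (k+1) + qconv x k := by
      simp [qconv, pq]
    have ha : 1 ≤ cfA x (k+2) := by
      have h := gauss_iter x hirr hx (k+1)
      simpa [cfA] using floor_one_div_ge h.2
    nlinarith [ih.1, ih.2]

/-- `𝐓^n(x₀, y₀) = (T^{n+1}(x), -q_{n+1}/q_n)`. -/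
theorem stmt_1 (x : ℝ) (hirr : Irrational x) (hx : x ∈ Set.Ioo (0:ℝ) 1) (n : ℕ) :
    natExt^[n] (initPt x) =
      (gaussMap^[n+1] x, -((qconv x (n+1) : ℝ) / (qconv x n : ℝ))) := by
  induction n with
  | zero =>
    simp only [Function.iterate_zero_apply, Function.iterate_one, initPt, gaussMap]
    ext <;> simp [qconv, pq, gaussMap]
  | succ k ih =>
    rw [Function.iterate_succ_apply', ih]
    have hy := gauss_iter x hirr hx (k+1)
    set y := gaussMap^[k+1] x with hydef
    have hqk := (qconv_pos x hirr hx k).1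
    have hqk1 := (qconv_pos x hirr hx k).2
    have hqkR : (0:ℝ) < (qconv x k : ℝ) := by exact_mod_cast hqk
    have hqk1R : (0:ℝ) < (qconv x (k+1) : ℝ) := by exact_mod_cast hqk1
    have hrec : qconv x (k+2) = cfA x (k+2) * qconv x (k+1) + qconv x k := by
      simp [qconv, pq]
    have hcfA : cfA x (k+2) = ⌊1/y⌋ := by simp [cfA, hydef]
    ext
    · show 1/y - (⌊1/y⌋:ℝ) = gaussMap^[k+1+1] x
      rw [Function.iterate_succ_apply']
      rfl
    · show 1/(-((qconv x (k+1) : ℝ) / (qconv x k : ℝ))) - (⌊1/y⌋:ℝ) =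
        -((qconv x (k+1+1) : ℝ) / (qconv x (k+1) : ℝ))
      rw [hrec, hcfA]
      push_cast
      have hne : ((qconv x (k+1)):ℝ) ≠ 0 := hqk1R.ne'
      have hne0 : ((qconv x k):ℝ) ≠ 0 := hqkR.ne'
      rw [div_neg, one_div, inv_div]
      rw [add_div, mul_div_assoc, div_self hne]
      ring
end
end

section
/- For α ∈ (0,1], the μ-measure of Ω_α = {(x,y) ∈ Ω : 1/(x−y) < α} equals (log 2)^{−1}(1 − α + log 2 + log α) if 1/2 ≤ α ≤ 1, and equals (log 2)^{−1} α if 0 < α ≤ 1/2. -/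
open Real MeasureTheory Filter Set
open scoped Classical

noncomputable section

open scoped ENNReal in
lemma inner_int (c : ℝ) (hc : 0 ≤ c) (x m : ℝ) (h : m < x) :
    ∫⁻ y in Set.Iio m, ENNReal.ofReal (c * ((x - y)⁻¹)^2) =
      ENNReal.ofReal (c * (x - m)⁻¹) := by
  have hs : (0:ℝ) < x - m := by linarith
  have hmp : MeasurePreserving (fun t : ℝ => x - t) volume volume :=
    MeasureTheory.Measure.measurePreserving_sub_left volume x
  have hemb : MeasurableEmbedding (fun t : ℝ => x - t) :=
    (Homeomorph.subLeft x).measurableEmbedding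
  have hpre : (fun t : ℝ => x - t) ⁻¹' Set.Ioi (x - m) = Set.Iio m := by
    ext y; simp only [Set.mem_preimage, Set.mem_Ioi, Set.mem_Iio]
    constructor <;> intro <;> linarith
  have key := hmp.setLIntegral_comp_preimage_emb hemb
      (fun t => ENNReal.ofReal (c * (t⁻¹)^2)) (Set.Ioi (x - m))
  rw [hpre] at key
  rw [key]
  have heq : ∀ t ∈ Set.Ioi (x - m), c * t ^ (-2:ℝ) = c * (t⁻¹)^2 := by
    intro t ht
    have ht0 : (0:ℝ) < t := lt_trans hs ht
    rw [Real.rpow_neg ht0.le, show ((2:ℝ)) = ((2:ℕ):ℝ) by norm_num, Real.rpow_natCast]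
    rw [inv_pow]
  have hi : IntegrableOn (fun t : ℝ => c * (t⁻¹)^2) (Set.Ioi (x - m)) :=
    IntegrableOn.congr_fun
      ((integrableOn_Ioi_rpow_of_lt (by norm_num : (-2:ℝ) < -1) hs).const_mul c)
      heq measurableSet_Ioi
  rw [← ofReal_integral_eq_lintegral_ofReal hi]
  · congr 1
    have : ∫ t in Set.Ioi (x - m), c * (t⁻¹)^2 = c * ∫ t in Set.Ioi (x-m), t ^ (-2:ℝ) := by
      rw [← integral_const_mul]
      exact (setIntegral_congr_fun measurableSet_Ioi heq).symm
    rw [this, integral_Ioi_rpow_of_lt (by norm_num) hs]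
    rw [show (-2:ℝ) + 1 = -1 by norm_num, Real.rpow_neg hs.le, Real.rpow_one]
    ring
  · filter_upwards with t
    positivity

open scoped ENNReal in
lemma reduce (α : ℝ) (hα : α ∈ Set.Ioc (0:ℝ) 1) :
    μnat (Ωα α) = ∫⁻ x in Set.Ioo (0:ℝ) 1,
      ENNReal.ofReal ((Real.log 2)⁻¹ * (x - min (-1) (x - 1/α))⁻¹) := by
  obtain ⟨hα0, hα1⟩ := hα
  set c : ℝ := (Real.log 2)⁻¹ with hc
  have hc0 : 0 ≤ c := inv_nonneg.mpr (Real.log_nonneg (by norm_num))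
  set f : ℝ × ℝ → ℝ≥0∞ := fun p => ENNReal.ofReal (c * ((p.1 - p.2)⁻¹)^2) with hfdef
  have hf : Measurable f :=
    ENNReal.measurable_ofReal.comp
      ((((measurable_fst.sub measurable_snd).inv).pow_const 2).const_mul c)
  set mfun : ℝ → ℝ := fun x => min (-1) (x - 1/α) with hmfun
  have hmc : Continuous mfun := continuous_const.min (continuous_id.sub continuous_const)
  have hkey : ∀ x y : ℝ, 0 < x - y → (1/(x-y) < α ↔ y < x - 1/α) := by
    intro x y hxy
    rw [div_lt_iff₀ hxy, lt_sub_comm, div_lt_iff₀ hα0]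
    constructor <;> intro h <;> nlinarith [h]
  have hSeq : Ωα α = {p : ℝ × ℝ | p.1 ∈ Set.Ioo (0:ℝ) 1 ∧ p.2 < mfun p.1} := by
    ext ⟨x, y⟩
    simp only [Ωα, Ωset, Set.mem_setOf_eq, Set.mem_sep_iff, Set.mem_prod, Set.mem_Ioo,
      Set.mem_Iio, lt_min_iff, hmfun]
    constructor
    · rintro ⟨⟨hx, hy⟩, hlt⟩
      exact ⟨hx, hy, (hkey x y (by linarith [hx.1])).mp hlt⟩
    · rintro ⟨hx, hy, hlt⟩
      exact ⟨⟨hx, hy⟩, (hkey x y (by linarith [hx.1])).mpr hlt⟩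
  have hS' : MeasurableSet {p : ℝ × ℝ | p.1 ∈ Set.Ioo (0:ℝ) 1 ∧ p.2 < mfun p.1} := by
    have h1 : MeasurableSet {p : ℝ × ℝ | p.1 ∈ Set.Ioo (0:ℝ) 1} :=
      measurable_fst measurableSet_Ioo
    have h2 : MeasurableSet {p : ℝ × ℝ | p.2 < mfun p.1} :=
      measurableSet_lt measurable_snd (hmc.measurable.comp measurable_fst)
    exact h1.inter h2
  have hS : MeasurableSet (Ωα α) := hSeq ▸ hS'
  have hsub : Ωα α ⊆ Ωset := Set.sep_subset _ _
  rw [μnat, withDensity_apply _ hS, Measure.restrict_restrict hS,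
    Set.inter_eq_left.mpr hsub]
  rw [show (fun p : ℝ × ℝ => ENNReal.ofReal ((Real.log 2)⁻¹ * ((p.1 - p.2)⁻¹)^2)) = f from rfl]
  rw [hSeq, ← lintegral_indicator hS' f]
  rw [MeasureTheory.Measure.volume_eq_prod, lintegral_prod _ ((hf.indicator hS').aemeasurable)]
  have hslice : ∀ x : ℝ, (∫⁻ y, Set.indicator {p : ℝ × ℝ | p.1 ∈ Set.Ioo (0:ℝ) 1 ∧ p.2 < mfun p.1} f (x, y)) =
      Set.indicator (Set.Ioo (0:ℝ) 1) (fun x => ∫⁻ y in Set.Iio (mfun x), f (x, y)) x := by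
    intro x
    have hxiff : x ∈ Set.Ioo (0:ℝ) 1 ↔ (0 < x ∧ x < 1) := Set.mem_Ioo
    by_cases hx : x ∈ Set.Ioo (0:ℝ) 1
    · have hx' : (0 < x ∧ x < 1) := hxiff.mp hx
      rw [Set.indicator_of_mem hx, ← lintegral_indicator measurableSet_Iio _]
      congr 1; funext y
      by_cases hy : y < mfun x
      · simp [Set.indicator_apply, Set.mem_Iio, Set.mem_Ioo, hx', hy]
      · simp [Set.indicator_apply, Set.mem_Iio, Set.mem_Ioo, hx', hy]
    · have hx' : ¬(0 < x ∧ x < 1) := fun h => hx (hxiff.mpr h)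
      rw [Set.indicator_of_notMem hx]
      have : ∀ y : ℝ, Set.indicator {p : ℝ × ℝ | p.1 ∈ Set.Ioo (0:ℝ) 1 ∧ p.2 < mfun p.1} f (x, y) = 0 := by
        intro y
        simp [Set.indicator_apply, Set.mem_Ioo, hx']
      simp only [this, lintegral_zero]
  simp_rw [hslice]
  rw [lintegral_indicator measurableSet_Ioo _]
  refine setLIntegral_congr_fun measurableSet_Ioo (fun x hx => ?_)
  have hmx : mfun x < x := lt_of_le_of_lt (min_le_left _ _) (by linarith [hx.1])
  exact inner_int c hc0 x (mfun x) hmx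

lemma case_low (α : ℝ) (hα0 : 0 < α) (hh : α ≤ 1/2) :
    ∫⁻ x in Set.Ioo (0:ℝ) 1,
      ENNReal.ofReal ((Real.log 2)⁻¹ * (x - min (-1) (x - 1/α))⁻¹)
      = ENNReal.ofReal ((Real.log 2)⁻¹ * α) := by
  have h2 : 2 ≤ 1/α := (le_div_iff₀ hα0).mpr (by linarith)
  have : ∀ x ∈ Set.Ioo (0:ℝ) 1,
      ENNReal.ofReal ((Real.log 2)⁻¹ * (x - min (-1) (x - 1/α))⁻¹)
        = ENNReal.ofReal ((Real.log 2)⁻¹ * α) := by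
    intro x hx
    rw [min_eq_right (by linarith [hx.2] : x - 1/α ≤ -1)]
    rw [show x - (x - 1/α) = 1/α by ring, one_div, inv_inv]
  rw [setLIntegral_congr_fun measurableSet_Ioo this,
    setLIntegral_const, Real.volume_Ioo]
  norm_num

lemma case_high (α : ℝ) (hα0 : 0 < α) (hα1 : α ≤ 1) (hh : 1/2 ≤ α) :
    ∫⁻ x in Set.Ioo (0:ℝ) 1,
      ENNReal.ofReal ((Real.log 2)⁻¹ * (x - min (-1) (x - 1/α))⁻¹)
      = ENNReal.ofReal ((Real.log 2)⁻¹ * (1 - α + Real.log 2 + Real.log α)) := by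
  set c : ℝ := (Real.log 2)⁻¹ with hc
  have hc0 : 0 ≤ c := inv_nonneg.mpr (Real.log_nonneg (by norm_num))
  have h1a : 1 ≤ 1/α := (le_div_iff₀ hα0).mpr (by linarith)
  have h2a : 1/α ≤ 2 := by rw [div_le_iff₀ hα0]; linarith
  have hb0 : (0:ℝ) ≤ 1/α - 1 := by linarith
  have hb1 : (1:ℝ)/α - 1 ≤ 1 := by linarith
  rw [Measure.restrict_congr_set Ioo_ae_eq_Ioc]
  rw [← Set.Ioc_union_Ioc_eq_Ioc hb0 hb1,
    lintegral_union measurableSet_Ioc (Set.Ioc_disjoint_Ioc_of_le le_rfl)]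
  have hfirst : ∫⁻ x in Set.Ioc (0:ℝ) (1/α - 1),
      ENNReal.ofReal (c * (x - min (-1) (x - 1/α))⁻¹) = ENNReal.ofReal (c * (1 - α)) := by
    have heq : ∀ x ∈ Set.Ioc (0:ℝ) (1/α - 1),
        ENNReal.ofReal (c * (x - min (-1) (x - 1/α))⁻¹) = ENNReal.ofReal (c * α) := by
      intro x hx
      obtain ⟨hx1, hx2⟩ := hx
      rw [min_eq_right (by linarith : x - 1/α ≤ -1)]
      rw [show x - (x - 1/α) = 1/α by ring, one_div, inv_inv]
    rw [setLIntegral_congr_fun measurableSet_Ioc heq,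
      setLIntegral_const, Real.volume_Ioc, ← ENNReal.ofReal_mul (by positivity)]
    congr 1
    field_simp
    ring
  have hsecond : ∫⁻ x in Set.Ioc (1/α - 1) 1,
      ENNReal.ofReal (c * (x - min (-1) (x - 1/α))⁻¹)
        = ENNReal.ofReal (c * (Real.log 2 + Real.log α)) := by
    have hcong : ∀ x ∈ Set.Ioc (1/α - 1) 1,
        ENNReal.ofReal (c * (x - min (-1) (x - 1/α))⁻¹) = ENNReal.ofReal (c * (x + 1)⁻¹) := by
      intro x hx
      obtain ⟨hx1, hx2⟩ := hx
      rw [min_eq_left (by linarith : (-1:ℝ) ≤ x - 1/α)]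
      norm_num
    rw [setLIntegral_congr_fun measurableSet_Ioc hcong]
    have hcont : ContinuousOn (fun x : ℝ => c * (x + 1)⁻¹) (Set.Icc (1/α - 1) 1) := by
      refine continuousOn_const.mul (ContinuousOn.inv₀ ?_ ?_)
      · exact (continuous_id.add continuous_const).continuousOn
      · intro x hx
        have := hx.1
        exact ne_of_gt (by linarith)
    have hint : IntegrableOn (fun x : ℝ => c * (x + 1)⁻¹) (Set.Ioc (1/α - 1) 1) :=
      (hcont.integrableOn_Icc).mono_set Set.Ioc_subset_Icc_self
    rw [← ofReal_integral_eq_lintegral_ofReal hint ?nn]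
    case nn =>
      filter_upwards [ae_restrict_mem measurableSet_Ioc] with x hx
      have h1 : (0:ℝ) < x + 1 := by linarith [hx.1]
      positivity
    congr 1
    rw [← intervalIntegral.integral_of_le hb1]
    have hftc : ∫ x in (1/α - 1)..1, c * (x + 1)⁻¹
        = (fun x : ℝ => c * Real.log (x + 1)) 1 - (fun x : ℝ => c * Real.log (x + 1)) (1/α - 1) := by
      refine intervalIntegral.integral_eq_sub_of_hasDerivAt (f := fun x : ℝ => c * Real.log (x + 1)) (f' := fun x : ℝ => c * (x + 1)⁻¹) (fun x hx => ?_) ?_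
      · rw [Set.uIcc_of_le hb1] at hx
        have hpos : (0:ℝ) < x + 1 := by linarith [hx.1]
        have h1 : HasDerivAt (fun x : ℝ => x + 1) 1 x := (hasDerivAt_id x).add_const 1
        have h2 := (Real.hasDerivAt_log hpos.ne').comp x h1
        simpa using h2.const_mul c
      · apply ContinuousOn.intervalIntegrable
        rwa [Set.uIcc_of_le hb1]
    rw [hftc]
    simp only []
    rw [show (1:ℝ)/α - 1 + 1 = 1/α by ring, show (1:ℝ) + 1 = 2 by norm_num,
      one_div, Real.log_inv]
    ring
  rw [hfirst, hsecond,
    ← ENNReal.ofReal_add (mul_nonneg hc0 (by linarith)) ?h2]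
  case h2 =>
    have hlog : Real.log (1/2) ≤ Real.log α := Real.log_le_log (by norm_num) (by linarith)
    rw [one_div, Real.log_inv] at hlog
    exact mul_nonneg hc0 (by linarith)
  congr 1
  ring

/-- the value of `μ(Ω_α)`. -/
theorem stmt_4 (α : ℝ) (hα : α ∈ Set.Ioc (0:ℝ) 1) :
    (1/2 ≤ α →
      μnat (Ωα α) = ENNReal.ofReal ((Real.log 2)⁻¹ * (1 - α + Real.log 2 + Real.log α))) ∧
    (α ≤ 1/2 → μnat (Ωα α) = ENNReal.ofReal ((Real.log 2)⁻¹ * α)) := by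
  constructor
  · intro hh
    rw [reduce α hα, case_high α hα.1 hα.2 hh]
  · intro hh
    rw [reduce α hα, case_low α hα.1 hh]
end
end

section
/- For almost every x ∈ (0,1), liminf_{n→∞} θ_n(x) = 0; in particular, for every α ∈ (0,1] and almost every x, the set {n ≥ 1 : θ_n(x) < α} is infinite. -/
open Real MeasureTheory Filter Set
open scoped Classical

noncomputable section

lemma gauss_mem {x : ℝ} (hx : x ∈ Set.Ioo (0:ℝ) 1) (hirr : Irrational x) :
    gaussMap x ∈ Set.Ioo (0:ℝ) 1 ∧ Irrational (gaussMap x) := by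
  have hinv : Irrational (1/x) := by simpa [one_div] using hirr.inv
  have h1 : gaussMap x = Int.fract (1/x) := rfl
  have hi : Irrational (gaussMap x) := by rw [h1]; exact hinv.sub_intCast _
  refine ⟨⟨?_, ?_⟩, hi⟩
  · rcases (Int.fract_nonneg (1/x)).lt_or_eq with h | h
    · rw [h1]; exact h
    · exfalso
      apply hi
      rw [h1, ← h]
      exact ⟨0, by norm_num⟩
  · rw [h1]; exact Int.fract_lt_one _

lemma gauss_iter_mem {x : ℝ} (hx : x ∈ Set.Ioo (0:ℝ) 1) (hirr : Irrational x) (n : ℕ) :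
    gaussMap^[n] x ∈ Set.Ioo (0:ℝ) 1 ∧ Irrational (gaussMap^[n] x) := by
  induction n with
  | zero => exact ⟨hx, hirr⟩
  | succ n ih =>
    rw [Function.iterate_succ_apply']
    exact gauss_mem ih.1 ih.2

end

noncomputable section

def xit (x : ℝ) (n : ℕ) : ℝ := gaussMap^[n] x

def Pprod (x : ℝ) (n : ℕ) : ℝ := ∏ k ∈ Finset.range (n+1), xit x k

variable {x : ℝ}

lemma xit_mem (hx : x ∈ Set.Ioo (0:ℝ) 1) (hirr : Irrational x) (n : ℕ) :
    xit x n ∈ Set.Ioo (0:ℝ) 1 := (gauss_iter_mem hx hirr n).1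

lemma xit_irr (hx : x ∈ Set.Ioo (0:ℝ) 1) (hirr : Irrational x) (n : ℕ) :
    Irrational (xit x n) := (gauss_iter_mem hx hirr n).2

lemma cfA_succ (n : ℕ) : cfA x (n+1) = ⌊1 / xit x n⌋ := rfl

lemma one_lt_inv_xit (hx : x ∈ Set.Ioo (0:ℝ) 1) (hirr : Irrational x) (n : ℕ) :
    1 < 1 / xit x n := by
  have h := xit_mem hx hirr n
  rw [one_div]
  exact one_lt_inv_iff₀.mpr ⟨h.1, h.2⟩

lemma one_le_cfA (hx : x ∈ Set.Ioo (0:ℝ) 1) (hirr : Irrational x) (n : ℕ) :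
    1 ≤ cfA x (n+1) := by
  rw [cfA_succ, Int.le_floor]
  exact_mod_cast (one_lt_inv_xit hx hirr n).le

lemma xit_succ (n : ℕ) : xit x (n+1) = 1 / xit x n - cfA x (n+1) := by
  rw [xit, Function.iterate_succ_apply']
  rfl

lemma Pprod_pos (hx : x ∈ Set.Ioo (0:ℝ) 1) (hirr : Irrational x) (n : ℕ) :
    0 < Pprod x n :=
  Finset.prod_pos fun k _ => (xit_mem hx hirr k).1

lemma Pprod_succ (n : ℕ) : Pprod x (n+1) = Pprod x n * xit x (n+1) :=
  Finset.prod_range_succ _ _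

end

section Main
variable {x : ℝ} (hx : x ∈ Set.Ioo (0:ℝ) 1) (hirr : Irrational x)

lemma pq_zero : pq x 0 = (0, 1) := rfl
lemma pq_one : pq x 1 = (1, ⌊1/x⌋) := rfl
lemma pq_two (n : ℕ) : pq x (n+2) = (cfA x (n+2) * (pq x (n+1)).1 + (pq x n).1,
    cfA x (n+2) * (pq x (n+1)).2 + (pq x n).2) := rfl

lemma cfA_one : cfA x 1 = ⌊1/x⌋ := rfl

include hx hirr

lemma dio : ∀ n : ℕ, (qconv x n : ℝ) * x - (pconv x n : ℝ) = (-1)^n * Pprod x n ∧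
    (qconv x (n+1) : ℝ) * x - (pconv x (n+1) : ℝ) = (-1)^(n+1) * Pprod x (n+1) := by
  have hx0 : (0:ℝ) < x := hx.1
  intro n
  induction n with
  | zero =>
    constructor
    · simp [qconv, pconv, pq_zero, Pprod, xit]
    · have : Pprod x 1 = x * xit x 1 := by
        rw [Pprod]
        rw [Finset.prod_range_succ]
        simp [Pprod, xit]
      rw [this]
      have h1 : xit x 1 = 1/x - (⌊1/x⌋ : ℝ) := by
        rw [xit_succ]; simp [xit, cfA_one]
      rw [h1, qconv, pconv, pq_one]
      field_simp
      ring
  | succ n ih =>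
    refine ⟨ih.2, ?_⟩
    have hq : (qconv x (n+2) : ℝ) = (cfA x (n+2) : ℝ) * (qconv x (n+1) : ℝ) + qconv x n := by
      rw [qconv, qconv, qconv, pq_two]; push_cast; ring
    have hp : (pconv x (n+2) : ℝ) = (cfA x (n+2) : ℝ) * (pconv x (n+1) : ℝ) + pconv x n := by
      rw [pconv, pconv, pconv, pq_two]; push_cast; ring
    have hxn1 : xit x (n+1) ≠ 0 := ne_of_gt (xit_mem hx hirr (n+1)).1
    have hstep : xit x (n+2) = 1 / xit x (n+1) - cfA x (n+2) := xit_succ (n+1)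
    have hfact : 1 - (cfA x (n+2) : ℝ) * xit x (n+1) = xit x (n+1) * xit x (n+2) := by
      rw [hstep]
      field_simp
    calc (qconv x (n+2) : ℝ) * x - pconv x (n+2)
        = (cfA x (n+2) : ℝ) * ((qconv x (n+1) : ℝ) * x - pconv x (n+1))
          + ((qconv x n : ℝ) * x - pconv x n) := by rw [hq, hp]; ring
      _ = (cfA x (n+2) : ℝ) * ((-1)^(n+1) * Pprod x (n+1)) + (-1)^n * Pprod x n := by
          rw [ih.1, ih.2]
      _ = (-1)^n * Pprod x n * (1 - (cfA x (n+2):ℝ) * xit x (n+1)) := by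
          rw [Pprod_succ]; ring
      _ = (-1)^n * Pprod x n * (xit x (n+1) * xit x (n+2)) := by rw [hfact]
      _ = (-1)^(n+2) * Pprod x (n+2) := by
          rw [Pprod_succ, Pprod_succ]; ring

lemma det_id : ∀ n : ℕ, pconv x (n+1) * qconv x n - pconv x n * qconv x (n+1) = (-1)^n := by
  intro n
  induction n with
  | zero => simp [pconv, qconv, pq_zero, pq_one]
  | succ n ih =>
    have hq : qconv x (n+2) = cfA x (n+2) * qconv x (n+1) + qconv x n := by
      rw [qconv, qconv, qconv, pq_two]
    have hp : pconv x (n+2) = cfA x (n+2) * pconv x (n+1) + pconv x n := by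
      rw [pconv, pconv, pconv, pq_two]
    rw [hq, hp]
    have : (-1:ℤ)^(n+1) = -(-1)^n := by ring
    rw [this, ← ih]
    ring

lemma q_pos : ∀ n : ℕ, 1 ≤ qconv x n ∧ 1 ≤ qconv x (n+1) := by
  intro n
  induction n with
  | zero =>
    refine ⟨le_refl _ |>.trans_eq rfl |>.trans ?_, ?_⟩
    · simp [qconv, pq_zero]
    · have := one_le_cfA hx hirr 0
      simpa [qconv, pq_one, cfA_succ, xit] using this
  | succ n ih =>
    refine ⟨ih.2, ?_⟩
    have hq : qconv x (n+2) = cfA x (n+2) * qconv x (n+1) + qconv x n := by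
      rw [qconv, qconv, qconv, pq_two]
    have ha : 1 ≤ cfA x (n+2) := one_le_cfA hx hirr (n+1)
    nlinarith [ih.1, ih.2]

lemma q_succ_ge : ∀ n : ℕ, cfA x (n+1) * qconv x n ≤ qconv x (n+1) := by
  intro n
  cases n with
  | zero => simp [qconv, pq_zero, pq_one, cfA_one]
  | succ n =>
    show cfA x (n+2) * qconv x (n+1) ≤ qconv x (n+2)
    have hq : qconv x (n+2) = cfA x (n+2) * qconv x (n+1) + qconv x n := by
      rw [qconv, qconv, qconv, pq_two]
    have := (q_pos hx hirr n).1
    omega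

lemma key_id (n : ℕ) :
    (qconv x (n+1) : ℝ) * Pprod x n + (qconv x n : ℝ) * Pprod x (n+1) = 1 := by
  have h1 := (dio hx hirr n).1
  have h2 := (dio hx hirr n).2
  have hdet := det_id hx hirr n
  have hdet' : (pconv x (n+1) : ℝ) * qconv x n - (pconv x n : ℝ) * qconv x (n+1)
      = (-1)^n := by exact_mod_cast congrArg (fun z : ℤ => (z : ℝ)) hdet
  have hcomb : (qconv x (n+1) : ℝ) * ((qconv x n : ℝ) * x - pconv x n)
      - (qconv x n : ℝ) * ((qconv x (n+1) : ℝ) * x - pconv x (n+1)) = (-1)^n := by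
    rw [← hdet']; ring
  rw [h1, h2] at hcomb
  have hne : ((-1:ℝ))^n ≠ 0 := by positivity
  have : (-1:ℝ)^n * ((qconv x (n+1) : ℝ) * Pprod x n + (qconv x n : ℝ) * Pprod x (n+1))
      = (-1)^n * 1 := by linear_combination hcomb
  exact mul_left_cancel₀ hne this

lemma theta_eq (n : ℕ) : theta x n = (qconv x n : ℝ) * Pprod x n := by
  have h1 := (dio hx hirr n).1
  rw [theta, h1, abs_mul, abs_pow, abs_neg, abs_one, one_pow, one_mul,
    abs_of_pos (Pprod_pos hx hirr n)]

lemma theta_nonneg (n : ℕ) : 0 ≤ theta x n := by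
  rw [theta_eq hx hirr n]
  have hq : (1:ℝ) ≤ qconv x n := by exact_mod_cast (q_pos hx hirr n).1
  exact mul_nonneg (by linarith) (Pprod_pos hx hirr n).le

lemma theta_le_inv_cfA (n : ℕ) : theta x n ≤ 1 / (cfA x (n+1) : ℝ) := by
  have hkey := key_id hx hirr n
  have hq1 : (1:ℝ) ≤ qconv x n := by exact_mod_cast (q_pos hx hirr n).1
  have hq2 : (1:ℝ) ≤ qconv x (n+1) := by exact_mod_cast (q_pos hx hirr n).2
  have hP := Pprod_pos hx hirr n
  have hP1 := Pprod_pos hx hirr (n+1)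
  have ha : (1:ℝ) ≤ cfA x (n+1) := by exact_mod_cast one_le_cfA hx hirr n
  have hgq : (cfA x (n+1) : ℝ) * qconv x n ≤ qconv x (n+1) := by
    exact_mod_cast q_succ_ge hx hirr n
  -- q_{n+1} P_n ≤ 1
  have h1 : (qconv x (n+1) : ℝ) * Pprod x n ≤ 1 := by nlinarith
  have h2 : ((cfA x (n+1):ℝ)) * ((qconv x n : ℝ) * Pprod x n) ≤ 1 := by nlinarith
  rw [theta_eq hx hirr n, le_div_iff₀ (by linarith : (0:ℝ) < (cfA x (n+1):ℝ))]
  linarith [h2]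

lemma theta_le_one (n : ℕ) : theta x n ≤ 1 := by
  have := theta_le_inv_cfA hx hirr n
  have ha : (1:ℝ) ≤ cfA x (n+1) := by exact_mod_cast one_le_cfA hx hirr n
  have : 1 / (cfA x (n+1) : ℝ) ≤ 1 := by
    rw [div_le_one (by linarith)]; linarith
  linarith [theta_le_inv_cfA hx hirr n]

lemma theta_le_of_xit_lt {N : ℕ} (hN : 1 ≤ N) (n : ℕ) (h : xit x n < 1/N) :
    theta x n ≤ 1/N := by
  have hxm := xit_mem hx hirr n
  have hNpos : (0:ℝ) < N := by exact_mod_cast hN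
  have hNa : (N:ℝ) ≤ cfA x (n+1) := by
    rw [cfA_succ]
    have h2 : (N:ℝ) * xit x n < 1 := by
      calc (N:ℝ) * xit x n < N * (1/N) := mul_lt_mul_of_pos_left h hNpos
        _ = 1 := by field_simp
    have : (N:ℝ) ≤ 1 / xit x n := by
      rw [le_div_iff₀ hxm.1]
      linarith
    exact_mod_cast Int.le_floor.mpr (by exact_mod_cast this)
  calc theta x n ≤ 1 / (cfA x (n+1) : ℝ) := theta_le_inv_cfA hx hirr n
    _ ≤ 1 / N := by
        apply one_div_le_one_div_of_le hNpos hNa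

end Main

lemma deterministic_conclusion {x : ℝ} (hx : x ∈ Set.Ioo (0:ℝ) 1) (hirr : Irrational x)
    (h : ∀ N : ℕ, 1 ≤ N → {n : ℕ | xit x n < 1/N}.Infinite) :
    Filter.liminf (fun n : ℕ => theta x n) Filter.atTop = 0 ∧
    ∀ α ∈ Set.Ioc (0:ℝ) 1, {n : ℕ | 1 ≤ n ∧ theta x n < α}.Infinite := by
  have hbl : Filter.IsBoundedUnder (· ≥ ·) Filter.atTop (fun n : ℕ => theta x n) :=
    Filter.isBoundedUnder_of ⟨0, fun n => theta_nonneg hx hirr n⟩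
  have hbu : Filter.IsBoundedUnder (· ≤ ·) Filter.atTop (fun n : ℕ => theta x n) :=
    Filter.isBoundedUnder_of ⟨1, fun n => theta_le_one hx hirr n⟩
  have hub : ∀ N : ℕ, 1 ≤ N →
      Filter.liminf (fun n : ℕ => theta x n) Filter.atTop ≤ 1/N := by
    intro N hN
    apply Filter.liminf_le_of_frequently_le _ hbl
    rw [Nat.frequently_atTop_iff_infinite]
    exact (h N hN).mono fun n hn => theta_le_of_xit_lt hx hirr hN n hn
  have hlb : 0 ≤ Filter.liminf (fun n : ℕ => theta x n) Filter.atTop := by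
    apply Filter.le_liminf_of_le hbu.isCoboundedUnder_ge
    exact Filter.Eventually.of_forall fun n => theta_nonneg hx hirr n
  have hlim : Filter.liminf (fun n : ℕ => theta x n) Filter.atTop = 0 := by
    by_contra hne
    have hpos : 0 < Filter.liminf (fun n : ℕ => theta x n) Filter.atTop :=
      lt_of_le_of_ne hlb (Ne.symm hne)
    obtain ⟨N, hNa⟩ := exists_nat_gt (1 / Filter.liminf (fun n : ℕ => theta x n) Filter.atTop)
    have hN1 : 1 ≤ N := by
      by_contra hc
      interval_cases N
      · simp at hNa
        linarith
    have := hub N hN1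
    have hinv : 1 / (N:ℝ) < Filter.liminf (fun n : ℕ => theta x n) Filter.atTop := by
      rw [div_lt_iff₀ (by positivity : (0:ℝ) < N)]
      rw [div_lt_iff₀ hpos] at hNa
      linarith
    linarith
  refine ⟨hlim, ?_⟩
  intro α hα
  obtain ⟨N, hNa⟩ := exists_nat_gt (1/α)
  have hN1 : 1 ≤ N := by
    by_contra hc
    interval_cases N
    · simp at hNa
      linarith [hα.1]
  have hsub : {n : ℕ | xit x n < 1/N} \ {0} ⊆ {n : ℕ | 1 ≤ n ∧ theta x n < α} := by
    rintro n ⟨hn, hn0⟩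
    refine ⟨Nat.one_le_iff_ne_zero.mpr hn0, ?_⟩
    have h1 : theta x n ≤ 1/N := theta_le_of_xit_lt hx hirr hN1 n hn
    have h2 : 1/(N:ℝ) < α := by
      rw [div_lt_iff₀ (by positivity : (0:ℝ) < N)]
      rw [div_lt_iff₀ hα.1] at hNa
      linarith
    linarith
  exact (((h N hN1).diff (Set.finite_singleton 0)).mono hsub)

noncomputable section MeasurePart

open ENNReal

/-- 1-D change of variables for lintegral. -/
lemma lintegral_image_1d {s : Set ℝ} {f f' : ℝ → ℝ} (hs : MeasurableSet s)
    (hf' : ∀ x ∈ s, HasDerivWithinAt f (f' x) s x) (hf : Set.InjOn f s) (g : ℝ → ℝ≥0∞) :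
    ∫⁻ x in f '' s, g x = ∫⁻ x in s, ENNReal.ofReal |f' x| * g (f x) := by
  simpa only [ContinuousLinearMap.det_toSpanSingleton] using
    MeasureTheory.lintegral_image_eq_lintegral_abs_det_fderiv_mul volume hs
      (fun x hx => (hf' x hx).hasFDerivWithinAt) hf g

def gaussNu : Measure ℝ :=
  (volume.restrict (Set.Ioo (0:ℝ) 1)).withDensity (fun x => ENNReal.ofReal (1+x)⁻¹)

def gk (k : ℕ) (y : ℝ) : ℝ := (y + k)⁻¹

lemma gk_hasDeriv (k : ℕ) (y : ℝ) (hy : 0 < y) :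
    HasDerivAt (gk k) (-(((y + k)^2)⁻¹)) y := by
  have hne : y + (k:ℝ) ≠ 0 := by positivity
  have h1 : HasDerivAt (fun y : ℝ => y + (k:ℝ)) 1 y := (hasDerivAt_id y).add_const _
  have h2 := h1.inv hne
  have : -1 / (y + (k:ℝ))^2 = -(((y + (k:ℝ))^2)⁻¹) := by ring
  rw [this] at h2
  exact h2

lemma gk_injOn (k : ℕ) : Function.Injective (gk k) := by
  intro a b hab
  have := inv_injective hab
  linarith [congrArg id this]

lemma gk_maps (k : ℕ) (hk : 1 ≤ k) {y : ℝ} (hy : y ∈ Set.Ioo (0:ℝ) 1) :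
    gk k y ∈ Set.Ioo (0:ℝ) 1 := by
  have h1 : (1:ℝ) ≤ k := by exact_mod_cast hk
  have h2 : (0:ℝ) < y + k := by linarith [hy.1]
  constructor
  · rw [gk]; positivity
  · rw [gk]
    have : (1:ℝ) < y + k := by linarith [hy.1]
    rw [inv_lt_one_iff₀]
    right; exact this

lemma measurable_gaussMap : Measurable gaussMap := by
  apply Measurable.sub
  · exact measurable_const.div measurable_id
  · exact Measurable.comp Measurable.of_discrete
      (Int.measurable_floor.comp (measurable_const.div measurable_id))

lemma measurableSet_irrational : MeasurableSet {x : ℝ | Irrational x} := by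
  have : {x : ℝ | Irrational x} = (Set.range ((↑) : ℚ → ℝ))ᶜ := rfl
  rw [this]
  exact (Set.countable_range _).measurableSet.compl

/-- measure of image of a measurable subset of (0,1) under gk, w.r.t. gaussNu. -/
lemma nu_image_gk {S : Set ℝ} (hSm : MeasurableSet S) (hS : S ⊆ Set.Ioo (0:ℝ) 1)
    (k : ℕ) (hk : 1 ≤ k) :
    gaussNu (gk k '' S) = ∫⁻ y in S, ENNReal.ofReal ((y+k)⁻¹ - (y+k+1)⁻¹) := by
  have himg : gk k '' S ⊆ Set.Ioo (0:ℝ) 1 := by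
    rintro _ ⟨y, hy, rfl⟩; exact gk_maps k hk (hS hy)
  have hder : ∀ y ∈ S, HasDerivWithinAt (gk k) (-(((y + k)^2)⁻¹)) S y :=
    fun y hy => (gk_hasDeriv k y (hS hy).1).hasDerivWithinAt
  have himgm : MeasurableSet (gk k '' S) :=
    MeasureTheory.measurable_image_of_fderivWithin hSm
      (fun y hy => (hder y hy).hasFDerivWithinAt) (gk_injOn k).injOn
  rw [gaussNu, withDensity_apply _ himgm, Measure.restrict_restrict himgm,
    Set.inter_eq_self_of_subset_left himg,
    lintegral_image_1d hSm hder (gk_injOn k).injOn]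
  apply MeasureTheory.setLIntegral_congr_fun_ae hSm
  apply Filter.Eventually.of_forall
  intro y hy
  have hy0 : 0 < y := (hS hy).1
  have h1 : (0:ℝ) < y + k := by positivity
  have h2 : (0:ℝ) < y + k + 1 := by linarith
  rw [← ENNReal.ofReal_mul (by positivity)]
  congr 1
  have h3 : (0:ℝ) < 1 + gk k y := by
    have := (gk_maps k hk (hS hy)).1; linarith
  rw [abs_neg, abs_of_nonneg (by positivity : (0:ℝ) ≤ ((y+k)^2)⁻¹)]
  rw [gk] at h3 ⊢
  field_simp
  ring

end MeasurePart

noncomputable section MeasurePart2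
open ENNReal

lemma nu_apply {S : Set ℝ} (hSm : MeasurableSet S) (hS : S ⊆ Set.Ioo (0:ℝ) 1) :
    gaussNu S = ∫⁻ y in S, ENNReal.ofReal (1+y)⁻¹ ∂volume := by
  rw [gaussNu, withDensity_apply _ hSm, Measure.restrict_restrict hSm,
    Set.inter_eq_self_of_subset_left hS]

lemma meas_dens : Measurable (fun y : ℝ => ENNReal.ofReal (1+y)⁻¹) :=
  ((measurable_const.add measurable_id).inv).ennreal_ofReal

lemma telescope_sum (y : ℝ) (m : ℕ) :
    ∑ k ∈ Finset.Icc 1 m, ((y+(k:ℝ))⁻¹ - (y+(k:ℝ)+1)⁻¹) = (y+1)⁻¹ - (y+(m:ℝ)+1)⁻¹ := by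
  induction m with
  | zero => simp
  | succ m ih =>
    rw [Finset.sum_Icc_succ_top (by omega : 1 ≤ m+1), ih]
    push_cast
    ring

lemma step_cover (N : ℕ) (hN1 : 1 ≤ N) {S : Set ℝ} (hSS : S ⊆ Set.Ioo (0:ℝ) 1) :
    {x | x ∈ Set.Ioo (1/(N:ℝ)) 1 ∧ Irrational x ∧ gaussMap x ∈ S}
      ⊆ ⋃ k ∈ Finset.Icc 1 (N-1), gk k '' S := by
  rintro x ⟨hx, hirr, hTx⟩
  have hNR : (0:ℝ) < N := by exact_mod_cast hN1
  have hx0 : 0 < x := lt_trans (by positivity) hx.1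
  have hx1 : x < 1 := hx.2
  have hinv1 : 1 < 1/x := by rw [one_div]; exact one_lt_inv_iff₀.mpr ⟨hx0, hx1⟩
  have hinvN : 1/x < N := by
    rw [div_lt_iff₀ hx0]
    have h1 : 1/(N:ℝ) < x := hx.1
    calc (1:ℝ) = N * (1/N) := by field_simp
      _ < N * x := by exact mul_lt_mul_of_pos_left h1 hNR
  have hfl1 : 1 ≤ ⌊1/x⌋ := Int.le_floor.mpr (by exact_mod_cast hinv1.le)
  have hflN : ⌊1/x⌋ < N := by
    have h := lt_of_le_of_lt (Int.floor_le (1/x)) hinvN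
    exact_mod_cast h
  set k : ℕ := (⌊1/x⌋).toNat with hk
  have hkcast : (k:ℤ) = ⌊1/x⌋ := Int.toNat_of_nonneg (by linarith)
  have hkR : (k:ℝ) = ((⌊1/x⌋ : ℤ) : ℝ) := by exact_mod_cast congrArg (fun z : ℤ => (z:ℝ)) hkcast
  have hk1 : 1 ≤ k := by omega
  have hkN : k ≤ N - 1 := by omega
  refine Set.mem_biUnion (Finset.mem_Icc.mpr ⟨hk1, hkN⟩) ?_
  refine ⟨gaussMap x, hTx, ?_⟩
  rw [gk, gaussMap, hkR]
  have : 1/x - (⌊1/x⌋:ℝ) + ⌊1/x⌋ = 1/x := by ring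
  rw [this, one_div, inv_inv]

lemma step_contract (N : ℕ) (hN : 1 ≤ N) {S : Set ℝ} (hSm : MeasurableSet S)
    (hS : S ⊆ Set.Ioo (0:ℝ) 1) :
    gaussNu {x | x ∈ Set.Ioo (1/(N:ℝ)) 1 ∧ Irrational x ∧ gaussMap x ∈ S}
      ≤ ENNReal.ofReal (1 - 1/N) * gaussNu S := by
  have hNR : (0:ℝ) < N := by exact_mod_cast hN
  calc gaussNu {x | x ∈ Set.Ioo (1/(N:ℝ)) 1 ∧ Irrational x ∧ gaussMap x ∈ S}
      ≤ gaussNu (⋃ k ∈ Finset.Icc 1 (N-1), gk k '' S) :=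
        measure_mono (step_cover N hN hS)
    _ ≤ ∑ k ∈ Finset.Icc 1 (N-1), gaussNu (gk k '' S) := measure_biUnion_finset_le _ _
    _ = ∑ k ∈ Finset.Icc 1 (N-1), ∫⁻ y in S, ENNReal.ofReal ((y+k)⁻¹ - (y+k+1)⁻¹) := by
        apply Finset.sum_congr rfl
        intro k hkmem
        exact nu_image_gk hSm hS k (Finset.mem_Icc.mp hkmem).1
    _ = ∫⁻ y in S, ∑ k ∈ Finset.Icc 1 (N-1), ENNReal.ofReal ((y+k)⁻¹ - (y+k+1)⁻¹) := by
        rw [MeasureTheory.lintegral_finset_sum]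
        intro k _
        fun_prop
    _ ≤ ∫⁻ y in S, ENNReal.ofReal (1 - 1/N) * ENNReal.ofReal (1+y)⁻¹ := by
        apply MeasureTheory.setLIntegral_mono (by fun_prop)
        intro y hy
        have hy0 : 0 < y := (hS hy).1
        have hterm : ∀ k ∈ Finset.Icc 1 (N-1), (0:ℝ) ≤ (y+k)⁻¹ - (y+k+1)⁻¹ := by
          intro k hkmem
          have h1 : (0:ℝ) < y + k := by positivity
          have h2 : (0:ℝ) < y + k + 1 := by linarith
          rw [sub_nonneg]
          apply inv_anti₀ h1 (by linarith)
        rw [← ENNReal.ofReal_sum_of_nonneg hterm, ← ENNReal.ofReal_mul (by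
          have h1N : 1/(N:ℝ) ≤ 1 := by
            rw [div_le_one hNR]; exact_mod_cast hN
          linarith)]
        apply ENNReal.ofReal_le_ofReal
        have htel : ∑ k ∈ Finset.Icc 1 (N-1), ((y+(k:ℝ))⁻¹ - (y+(k:ℝ)+1)⁻¹)
            = (y+1)⁻¹ - (y+(N:ℝ))⁻¹ := by
          rw [telescope_sum]
          have hc : ((N-1 : ℕ) : ℝ) + 1 = (N:ℝ) := by
            have : (1:ℕ) ≤ N := hN
            push_cast [this]
            ring
          rw [add_assoc, hc]
        rw [htel]
        have h1N : (1:ℝ) ≤ N := by exact_mod_cast hN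
        have hineq : (1/(N:ℝ)) * (1+y)⁻¹ ≤ (y+(N:ℝ))⁻¹ := by
          rw [one_div, ← mul_inv]
          exact inv_anti₀ (by positivity) (by nlinarith)
        have hyy : (y+1)⁻¹ = (1+y)⁻¹ := by ring_nf
        rw [hyy]
        nlinarith [hineq]
    _ = ENNReal.ofReal (1 - 1/N) * ∫⁻ y in S, ENNReal.ofReal (1+y)⁻¹ :=
        MeasureTheory.lintegral_const_mul _ meas_dens
    _ = ENNReal.ofReal (1 - 1/N) * gaussNu S := by rw [nu_apply hSm hS]

end MeasurePart2

noncomputable section MeasurePart3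
open ENNReal

def Gset (N n : ℕ) : Set ℝ := {x | ∀ k < n, gaussMap^[k] x ∈ Set.Ioo (1/(N:ℝ)) 1}

def Sset (N n : ℕ) : Set ℝ := Gset N n ∩ {x | Irrational x}

lemma measurableSet_Gset (N n : ℕ) : MeasurableSet (Gset N n) := by
  have : Gset N n = ⋂ (k : ℕ), ⋂ (_ : k < n), (gaussMap^[k]) ⁻¹' (Set.Ioo (1/(N:ℝ)) 1) := by
    ext x; simp [Gset]
  rw [this]
  exact MeasurableSet.iInter fun k => MeasurableSet.iInter fun _ =>
    (measurable_gaussMap.iterate k) measurableSet_Ioo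

lemma measurableSet_Sset (N n : ℕ) : MeasurableSet (Sset N n) :=
  (measurableSet_Gset N n).inter measurableSet_irrational

lemma Sset_subset (N : ℕ) (hN : 1 ≤ N) (n : ℕ) (hn : 1 ≤ n) :
    Sset N n ⊆ Set.Ioo (0:ℝ) 1 := by
  rintro x ⟨hG, _⟩
  have := hG 0 hn
  simp only [Function.iterate_zero_apply] at this
  refine ⟨lt_of_le_of_lt (by positivity) this.1, this.2⟩

lemma Sset_step (N : ℕ) (hN : 1 ≤ N) (n : ℕ) :
    Sset N (n+1) ⊆
      {x | x ∈ Set.Ioo (1/(N:ℝ)) 1 ∧ Irrational x ∧ gaussMap x ∈ Sset N n} := by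
  rintro x ⟨hG, hirr⟩
  have h0 : x ∈ Set.Ioo (1/(N:ℝ)) 1 := by
    have := hG 0 (by omega)
    simpa using this
  have hxI : x ∈ Set.Ioo (0:ℝ) 1 := ⟨lt_of_le_of_lt (by positivity) h0.1, h0.2⟩
  refine ⟨h0, hirr, ?_, (gauss_mem hxI hirr).2⟩
  intro k hk
  have := hG (k+1) (by omega)
  rwa [Function.iterate_succ_apply] at this

lemma nu_univ_le_one : gaussNu Set.univ ≤ 1 := by
  rw [gaussNu, withDensity_apply _ MeasurableSet.univ, Measure.restrict_univ]
  calc ∫⁻ y in Set.Ioo (0:ℝ) 1, ENNReal.ofReal (1+y)⁻¹ ∂volume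
      ≤ ∫⁻ _ in Set.Ioo (0:ℝ) 1, 1 ∂volume := by
        apply MeasureTheory.setLIntegral_mono measurable_const
        intro y hy
        rw [show (1:ℝ≥0∞) = ENNReal.ofReal 1 by simp]
        apply ENNReal.ofReal_le_ofReal
        rw [inv_le_one_iff₀]
        right; linarith [hy.1]
    _ = volume (Set.Ioo (0:ℝ) 1) := MeasureTheory.setLIntegral_one _
    _ = 1 := by simp

lemma contract_iter (N : ℕ) (hN : 1 ≤ N) (n : ℕ) :
    gaussNu (Sset N (n+1)) ≤ (ENNReal.ofReal (1 - 1/N))^n := by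
  induction n with
  | zero =>
    simpa using le_trans (measure_mono (Set.subset_univ _)) nu_univ_le_one
  | succ n ih =>
    calc gaussNu (Sset N (n+2))
        ≤ gaussNu {x | x ∈ Set.Ioo (1/(N:ℝ)) 1 ∧ Irrational x ∧ gaussMap x ∈ Sset N (n+1)} :=
          measure_mono (Sset_step N hN (n+1))
      _ ≤ ENNReal.ofReal (1 - 1/N) * gaussNu (Sset N (n+1)) :=
          step_contract N hN (measurableSet_Sset N (n+1)) (Sset_subset N hN (n+1) (by omega))
      _ ≤ ENNReal.ofReal (1 - 1/N) * (ENNReal.ofReal (1 - 1/N))^n := by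
          gcongr
      _ = (ENNReal.ofReal (1 - 1/N))^(n+1) := by ring

def Bcal (N : ℕ) : Set ℝ := ⋂ n, Sset N n

lemma Bcal_null (N : ℕ) (hN : 1 ≤ N) : volume (Bcal N) = 0 := by
  have hBm : MeasurableSet (Bcal N) := MeasurableSet.iInter fun n => measurableSet_Sset N n
  have hBsub : Bcal N ⊆ Set.Ioo (0:ℝ) 1 := by
    intro x hx
    exact Sset_subset N hN 1 le_rfl (Set.mem_iInter.mp hx 1)
  have hnu : gaussNu (Bcal N) = 0 := by
    have hle : ∀ n : ℕ, gaussNu (Bcal N) ≤ (ENNReal.ofReal (1 - 1/N))^n := by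
      intro n
      exact le_trans (measure_mono fun x hx => Set.mem_iInter.mp hx (n+1)) (contract_iter N hN n)
    have hr : ENNReal.ofReal (1 - 1/N) < 1 := by
      rw [ENNReal.ofReal_lt_one]
      have : (0:ℝ) < 1/N := by positivity
      linarith
    have htend := ENNReal.tendsto_pow_atTop_nhds_zero_of_lt_one hr
    have := ge_of_tendsto htend (Filter.Eventually.of_forall hle)
    exact le_antisymm this zero_le
  -- transfer to volume
  have h2 : ENNReal.ofReal (1/2) * volume (Bcal N) ≤ gaussNu (Bcal N) := by
    rw [nu_apply hBm hBsub]
    calc ENNReal.ofReal (1/2) * volume (Bcal N)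
        = ∫⁻ _ in Bcal N, ENNReal.ofReal (1/2) ∂volume := by
          rw [MeasureTheory.setLIntegral_const, mul_comm]
      _ ≤ ∫⁻ y in Bcal N, ENNReal.ofReal (1+y)⁻¹ ∂volume := by
          apply MeasureTheory.setLIntegral_mono meas_dens
          intro y hy
          apply ENNReal.ofReal_le_ofReal
          have h1 : (0:ℝ) < 1 + y := by linarith [(hBsub hy).1]
          have h2 : 1 + y < 2 := by linarith [(hBsub hy).2]
          rw [inv_eq_one_div, div_le_div_iff₀ (by norm_num) h1]
          linarith
  rw [hnu] at h2
  have := le_antisymm (le_trans (le_of_eq rfl) h2) zero_le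
  rcases mul_eq_zero.mp this with h | h
  · exfalso
    simp [ENNReal.ofReal_eq_zero] at h
  · exact h

end MeasurePart3

noncomputable section MeasurePart4
open ENNReal

lemma image_gk_null {Z : Set ℝ} (hZm : MeasurableSet Z) (hZ0 : volume Z = 0) (k : ℕ) :
    volume (gk k '' Z) = 0 := by
  -- split Z into Z ∩ {y | y + k ≠ 0 side issues}: gk has deriv only where y+k ≠ 0.
  -- Instead: gk k '' Z ⊆ gk k '' (Z \ {-(k:ℝ)}) ∪ {gk k (-(k:ℝ))}
  have hsub : gk k '' Z ⊆ gk k '' (Z \ {-(k:ℝ)}) ∪ {(0:ℝ)} := by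
    rintro _ ⟨y, hy, rfl⟩
    by_cases hne : y = -(k:ℝ)
    · right
      simp [gk, hne]
    · left
      exact ⟨y, ⟨hy, hne⟩, rfl⟩
  apply measure_mono_null hsub
  rw [measure_union_null_iff]
  constructor
  · -- change of variables on Z' := Z \ {-k}
    set Z' : Set ℝ := Z \ {-(k:ℝ)} with hZ'
    have hZ'm : MeasurableSet Z' := hZm.diff (measurableSet_singleton _)
    have hZ'0 : volume Z' = 0 := measure_mono_null Set.diff_subset hZ0
    have hder : ∀ y ∈ Z', HasDerivWithinAt (gk k) (-(((y + k)^2)⁻¹)) Z' y := by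
      intro y hy
      have hne : y + (k:ℝ) ≠ 0 := fun h =>
        hy.2 (by simp only [Set.mem_singleton_iff]; linarith)
      have h1 : HasDerivAt (fun y : ℝ => y + (k:ℝ)) 1 y := (hasDerivAt_id y).add_const _
      have h2 := h1.inv hne
      have h3 : -1 / (y + (k:ℝ))^2 = -(((y + (k:ℝ))^2)⁻¹) := by ring
      rw [h3] at h2
      exact h2.hasDerivWithinAt
    have := lintegral_image_1d hZ'm hder ((gk_injOn k).injOn) (fun _ => 1)
    have h1 : volume (gk k '' Z') = ∫⁻ _ in gk k '' Z', (1:ℝ≥0∞) := by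
      rw [MeasureTheory.setLIntegral_one]
    rw [h1, this]
    exact MeasureTheory.setLIntegral_measure_zero _ _ hZ'0
  · simp

lemma null_preimage {Z : Set ℝ} (hZm : MeasurableSet Z) (hZ0 : volume Z = 0) :
    volume {x | x ∈ Set.Ioo (0:ℝ) 1 ∧ Irrational x ∧ gaussMap x ∈ Z} = 0 := by
  have hcov : {x | x ∈ Set.Ioo (0:ℝ) 1 ∧ Irrational x ∧ gaussMap x ∈ Z}
      ⊆ ⋃ (j : ℕ), gk (j+1) '' Z := by
    rintro x ⟨hxI, hirr, hTx⟩
    have hx0 : 0 < x := hxI.1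
    have hinv1 : 1 < 1/x := by rw [one_div]; exact one_lt_inv_iff₀.mpr ⟨hx0, hxI.2⟩
    have hfl1 : 1 ≤ ⌊1/x⌋ := Int.le_floor.mpr (by exact_mod_cast hinv1.le)
    set k : ℕ := (⌊1/x⌋).toNat with hk
    have hkcast : (k:ℤ) = ⌊1/x⌋ := Int.toNat_of_nonneg (by linarith)
    have hkR : (k:ℝ) = ((⌊1/x⌋ : ℤ) : ℝ) := by exact_mod_cast congrArg (fun z : ℤ => (z:ℝ)) hkcast
    have hk1 : 1 ≤ k := by omega
    apply Set.mem_iUnion.mpr ⟨k - 1, ?_⟩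
    have hkk : k - 1 + 1 = k := by omega
    rw [hkk]
    refine ⟨gaussMap x, hTx, ?_⟩
    rw [gk, gaussMap, hkR]
    have : 1/x - (⌊1/x⌋:ℝ) + ⌊1/x⌋ = 1/x := by ring
    rw [this, one_div, inv_inv]
  apply measure_mono_null hcov
  exact MeasureTheory.measure_iUnion_null fun j => image_gk_null hZm hZ0 (j+1)

lemma iter_null {Z : Set ℝ} (hZm : MeasurableSet Z) (hZ0 : volume Z = 0) (m : ℕ) :
    volume {x | x ∈ Set.Ioo (0:ℝ) 1 ∧ Irrational x ∧ gaussMap^[m] x ∈ Z} = 0 := by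
  induction m with
  | zero =>
    apply measure_mono_null _ hZ0
    rintro x ⟨_, _, hx⟩
    simpa using hx
  | succ m ih =>
    set W : Set ℝ := {x | x ∈ Set.Ioo (0:ℝ) 1 ∧ Irrational x ∧ gaussMap^[m] x ∈ Z} with hW
    have hWm : MeasurableSet W := by
      apply MeasurableSet.inter measurableSet_Ioo
      · exact measurableSet_irrational.inter
          ((measurable_gaussMap.iterate m) hZm)
    have hsub : {x | x ∈ Set.Ioo (0:ℝ) 1 ∧ Irrational x ∧ gaussMap^[m+1] x ∈ Z}
        ⊆ {x | x ∈ Set.Ioo (0:ℝ) 1 ∧ Irrational x ∧ gaussMap x ∈ W} := by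
      rintro x ⟨hxI, hirr, hx⟩
      refine ⟨hxI, hirr, (gauss_mem hxI hirr).1, (gauss_mem hxI hirr).2, ?_⟩
      rwa [← Function.iterate_succ_apply]
    exact measure_mono_null hsub (null_preimage hWm ih)

end MeasurePart4



/-- for a.e. `x ∈ (0,1)`, `liminf θ_n(x) = 0`; in particular for every
`α ∈ (0,1]` the set `{n ≥ 1 : θ_n(x) < α}` is infinite. -/
theorem stmt_6 :
    ∀ᵐ x : ℝ, x ∈ Set.Ioo (0:ℝ) 1 →
      Filter.liminf (fun n : ℕ => theta x n) Filter.atTop = 0 ∧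
      ∀ α ∈ Set.Ioc (0:ℝ) 1, {n : ℕ | 1 ≤ n ∧ theta x n < α}.Infinite := by
  have hrat : volume {x : ℝ | ¬ Irrational x} = 0 := by
    have h : {x : ℝ | ¬ Irrational x} = Set.range ((↑) : ℚ → ℝ) := by
      ext x; simp [Irrational]
    rw [h]
    exact (Set.countable_range _).measure_zero _
  have hbad : volume (⋃ (N : ℕ), ⋃ (m : ℕ),
      {x | x ∈ Set.Ioo (0:ℝ) 1 ∧ Irrational x ∧ gaussMap^[m] x ∈ Bcal (N+1)}) = 0 :=
    MeasureTheory.measure_iUnion_null fun N => MeasureTheory.measure_iUnion_null fun m =>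
      iter_null (MeasurableSet.iInter fun n => measurableSet_Sset _ n)
        (Bcal_null (N+1) (by omega)) m
  rw [MeasureTheory.ae_iff]
  apply measure_mono_null _ (measure_union_null hrat hbad)
  intro x hx
  simp only [Set.mem_setOf_eq] at hx
  obtain ⟨hxI, hnP⟩ := _root_.not_imp.mp hx
  by_cases hirr : Irrational x
  · right
    -- there is N ≥ 1 with the set finite
    have hex : ∃ N : ℕ, 1 ≤ N ∧ {n : ℕ | xit x n < 1/N}.Finite := by
      by_contra hno
      push_neg at hno
      exact hnP (deterministic_conclusion hxI hirr fun N hN => hno N hN)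
    obtain ⟨N, hN1, hFin⟩ := hex
    obtain ⟨m, hm⟩ := hFin.bddAbove
    have hmem : gaussMap^[m+1] x ∈ Bcal N := by
      apply Set.mem_iInter.mpr
      intro n
      refine ⟨?_, xit_irr hxI hirr (m+1)⟩
      intro k _
      have hiter : gaussMap^[k] (gaussMap^[m+1] x) = xit x (k + (m+1)) := by
        rw [xit, ← Function.iterate_add_apply]
      rw [hiter]
      have hnot : ¬ (xit x (k + (m+1)) < 1/N) := by
        intro hlt
        have := hm hlt
        omega
      push_neg at hnot
      have hne : xit x (k + (m+1)) ≠ 1/(N:ℝ) := by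
        intro heq
        have : ¬ Irrational (1/(N:ℝ)) := by
          have : (1/(N:ℝ)) = (((N:ℚ)⁻¹ : ℚ) : ℝ) := by push_cast; rw [one_div]
          rw [this]
          exact Rat.not_irrational _
        exact this (heq ▸ xit_irr hxI hirr (k + (m+1)))
      exact ⟨lt_of_le_of_ne hnot (Ne.symm hne), (xit_mem hxI hirr (k+(m+1))).2⟩
    apply Set.mem_iUnion.mpr ⟨N-1, ?_⟩
    apply Set.mem_iUnion.mpr ⟨m+1, ?_⟩
    have : N - 1 + 1 = N := by omega
    rw [this]
    exact ⟨hxI, hirr, hmem⟩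
  · left
    exact hirr
end

section
/- The map Φ⁺(x,y) = (1/(x−y), −xy/(x−y)) is injective on Ω = (0,1) × (−∞,−1), its image is contained in the open triangle Λ = {(w,z) : w > 0, z > 0, w + z < 1}, and for every (w,z) ∈ Λ the point H(w,z) = ((1 − √(1 − 4wz))/(2w), (−1 − √(1 − 4wz))/(2w)) lies in Ω and satisfies Φ⁺(H(w,z)) = (w,z). -/
open Real MeasureTheory Filter Set
open scoped Classical

noncomputable section

/-- `Φ⁺(x,y) = (1/(x-y), -xy/(x-y))`. -/
def Φplus (p : ℝ × ℝ) : ℝ × ℝ := (1/(p.1 - p.2), -p.1 * p.2 / (p.1 - p.2))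

/-- The open triangle `Λ = {(w,z) : w > 0, z > 0, w + z < 1}`. -/
def Λset : Set (ℝ × ℝ) := {p | 0 < p.1 ∧ 0 < p.2 ∧ p.1 + p.2 < 1}

/-- `H(w,z) = ((1 - √(1-4wz))/(2w), (-1 - √(1-4wz))/(2w))`. -/
def Hmap (p : ℝ × ℝ) : ℝ × ℝ :=
  ((1 - Real.sqrt (1 - 4*p.1*p.2)) / (2*p.1),
   (-1 - Real.sqrt (1 - 4*p.1*p.2)) / (2*p.1))

lemma aux_key1 : ∀ p ∈ Ωset, Φplus p ∈ Λset ∧ Hmap (Φplus p) = p := by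
  rintro ⟨x, y⟩ hp
  simp only [Ωset, Set.mem_prod, Set.mem_Ioo, Set.mem_Iio] at hp
  obtain ⟨⟨hx0, hx1⟩, hy⟩ := hp
  have hd : 0 < x - y := by linarith
  have hd0 : x - y ≠ 0 := ne_of_gt hd
  have hsum : x + y < 0 := by linarith
  have hsq : 1 - 4 * (1/(x - y)) * (-x * y / (x - y)) = (-(x + y)/(x - y))^2 := by
    field_simp
    ring
  have hS : Real.sqrt (1 - 4 * (1/(x - y)) * (-x * y / (x - y))) = -(x + y)/(x - y) := by
    rw [hsq, Real.sqrt_sq (div_nonneg (by linarith) hd.le)]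
  constructor
  · refine ⟨one_div_pos.mpr hd, ?_, ?_⟩
    · show 0 < -x * y / (x - y)
      apply div_pos _ hd
      nlinarith
    · show 1/(x - y) + -x * y / (x - y) < 1
      rw [← add_div, div_lt_one hd]
      nlinarith
  · simp only [Hmap, Φplus, hS]
    refine Prod.ext ?_ ?_ <;> · show _ = _; field_simp; ring

lemma aux_key2 : ∀ p ∈ Λset, Hmap p ∈ Ωset ∧ Φplus (Hmap p) = p := by
  rintro ⟨w, z⟩ ⟨hw, hz, hwz⟩
  simp only at hw hz hwz
  have hw0 : w ≠ 0 := ne_of_gt hw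
  have hD : 0 < 1 - 4 * w * z := by nlinarith [sq_nonneg (w - z), sq_nonneg (w + z)]
  set S := Real.sqrt (1 - 4 * w * z) with hSdef
  have hS0 : 0 < S := Real.sqrt_pos.mpr hD
  have hSsq : S * S = 1 - 4 * w * z := Real.mul_self_sqrt hD.le
  have hS1 : S < 1 := by nlinarith
  have hx1 : (1 - S) / (2 * w) < 1 := by
    rw [div_lt_one (by positivity)]
    nlinarith
  have hy1 : (-1 - S) / (2 * w) < -1 := by
    rw [div_lt_iff₀ (by positivity)]
    nlinarith
  constructor
  · simp only [Hmap, Ωset, Set.mem_prod, Set.mem_Ioo, Set.mem_Iio]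
    exact ⟨⟨div_pos (by linarith) (by linarith), hx1⟩, hy1⟩
  · simp only [Hmap, Φplus, ← hSdef]
    have hdiff : (1 - S) / (2 * w) - (-1 - S) / (2 * w) = 1 / w := by
      field_simp
      norm_num
    refine Prod.ext ?_ ?_ <;> simp only [hdiff]
    · rw [one_div_one_div]
    · show -((1 - S) / (2 * w)) * ((-1 - S) / (2 * w)) / (1 / w) = z
      rw [div_div_eq_mul_div, div_one]
      field_simp
      linear_combination (-1) * hSsq

/-- `Φ⁺` is injective on `Ω`, its image is contained in `Λ`, and `H` is a
right inverse landing in `Ω`. -/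
theorem stmt_13 :
    Set.InjOn Φplus Ωset ∧ Φplus '' Ωset ⊆ Λset ∧
    ∀ p ∈ Λset, Hmap p ∈ Ωset ∧ Φplus (Hmap p) = p := by
  refine ⟨?_, ?_, aux_key2⟩
  · intro p hp q hq h
    have h1 := (aux_key1 p hp).2
    have h2 := (aux_key1 q hq).2
    rw [← h1, ← h2, h]
  · rintro _ ⟨p, hp, rfl⟩
    exact (aux_key1 p hp).1
end
end
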